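/- Let 𝕂 be the field of generalised Puiseux series in two variables t, u with real coefficients (the Hahn series field over ℝ with value group Lex ℝ²), ordered so that a nonzero series is positive iff its leading coefficient is positive, with val₂ : 𝕂 → T₂ ∪ {∞} sending a nonzero series to the lexicographic minimum of its support and 0 to ∞, applied coordinatewise. If K is a convex set contained in the nonnegative orthant 𝕂_{≥0}^d, then val₂(K) is a rank two tropically convex subset of (T₂ ∪ {∞})^d, and conversely every rank two tropically convex set arises in this way. Furthermore, if K is an ordinary polytope then val₂(K) is a rank two tropical polytope, and conversely every rank two tropical polytope is the image under val₂ of an ordinary polytope. -/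

import Mathlib

noncomputable section
open scoped Classical

/-- The value group `ℝ²` with the lexicographic ordering. -/
abbrev Gamma2 := Lex (ℝ × ℝ)

/-- The field `𝕂` of generalised Puiseux series in two variables: Hahn series over `ℝ`
with value group `Lex ℝ²`. -/
abbrev K2 := HahnSeries Gamma2 ℝ

/-- A nonzero series is positive iff its leading coefficient is positive. -/
def posK (x : K2) : Prop := x ≠ 0 ∧ 0 < x.coeff x.order

/-- Nonnegative elements of `𝕂`. -/
def nnegK (x : K2) : Prop := x = 0 ∨ posK x

/-- The rank two valuation: the lexicographic minimum of the support, and `∞` on `0`. -/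
def val2K (x : K2) : WithTop Gamma2 := if x = 0 then ⊤ else ↑x.order

/-- Coordinatewise rank two valuation on `𝕂^d`. -/
def val2vec {d : ℕ} (x : Fin d → K2) : Fin d → WithTop Gamma2 := fun i => val2K (x i)

/-- An ordinary cone in `𝕂^d`. -/
def IsConeK {d : ℕ} (K : Set (Fin d → K2)) : Prop :=
  K.Nonempty ∧ ∀ p ∈ K, ∀ q ∈ K, ∀ l m : K2, nnegK l → nnegK m → l • p + m • q ∈ K

/-- A polyhedral (finitely generated) cone in `𝕂^d`. -/
def IsPolyConeK {d : ℕ} (K : Set (Fin d → K2)) : Prop :=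
  ∃ (n : ℕ) (v : Fin n → Fin d → K2),
    K = {x | ∃ l : Fin n → K2, (∀ j, nnegK (l j)) ∧ x = ∑ j, l j • v j}

/-- The tropical combination `min(λ+p, μ+q)` in `(T₂ ∪ {∞})^d`. -/
def tropComb2 {d : ℕ} (l m : WithTop Gamma2) (p q : Fin d → WithTop Gamma2) :
    Fin d → WithTop Gamma2 :=
  fun i => min (l + p i) (m + q i)

/-- A rank two tropical cone in `(T₂ ∪ {∞})^d`. -/
def IsTropCone2 {d : ℕ} (M : Set (Fin d → WithTop Gamma2)) : Prop :=
  M.Nonempty ∧ ∀ p ∈ M, ∀ q ∈ M, ∀ l m : WithTop Gamma2, tropComb2 l m p q ∈ M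

/-- A polyhedral (finitely generated) rank two tropical cone. -/
def IsPolyTropCone2 {d : ℕ} (M : Set (Fin d → WithTop Gamma2)) : Prop :=
  ∃ (n : ℕ) (v : Fin n → Fin d → WithTop Gamma2),
    M = {x | ∃ lam : Fin n → WithTop Gamma2,
      x = fun i => Finset.univ.inf fun j => lam j + v j i}

/-- An (ordinary) convex subset of `𝕂^d`. -/
def IsConvexK {d : ℕ} (K : Set (Fin d → K2)) : Prop :=
  ∀ p ∈ K, ∀ q ∈ K, ∀ l m : K2, nnegK l → nnegK m → l + m = 1 → l • p + m • q ∈ K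

/-- An ordinary polytope in `𝕂^d`: the convex combinations of finitely many points. -/
def IsPolytopeK {d : ℕ} (K : Set (Fin d → K2)) : Prop :=
  ∃ (n : ℕ) (v : Fin n → Fin d → K2),
    K = {x | ∃ l : Fin n → K2, (∀ j, nnegK (l j)) ∧ (∑ j, l j) = 1 ∧
      x = ∑ j, l j • v j}

/-- A rank two tropically convex subset of `(T₂ ∪ {∞})^d`. -/
def IsTropConvex2 {d : ℕ} (M : Set (Fin d → WithTop Gamma2)) : Prop :=
  ∀ p ∈ M, ∀ q ∈ M, ∀ l m : WithTop Gamma2,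
    min l m = ((0 : Gamma2) : WithTop Gamma2) → tropComb2 l m p q ∈ M

/-- A rank two tropical polytope: the tropical convex combinations of finitely many
points. -/
def IsTropPolytope2 {d : ℕ} (M : Set (Fin d → WithTop Gamma2)) : Prop :=
  ∃ (n : ℕ) (v : Fin n → Fin d → WithTop Gamma2),
    M = {x | ∃ lam : Fin n → WithTop Gamma2,
      (Finset.univ.inf lam = ((0 : Gamma2) : WithTop Gamma2)) ∧
      x = fun i => Finset.univ.inf fun j => lam j + v j i}

lemma order_eq_of (x : K2) (γ : Gamma2) (h : x.coeff γ ≠ 0)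
    (h2 : ∀ δ, δ < γ → x.coeff δ = 0) : x ≠ 0 ∧ x.order = γ := by
  have hx : x ≠ 0 := fun h0 => h (by simp [h0])
  refine ⟨hx, le_antisymm (HahnSeries.order_le_of_coeff_ne_zero h) ?_⟩
  by_contra hlt
  exact (mt HahnSeries.coeff_order_eq_zero.mp hx) (h2 _ (lt_of_not_ge hlt))


lemma val2K_eq (x : K2) (hx : x ≠ 0) : val2K x = ↑x.order := if_neg hx


lemma val2K_zero : val2K 0 = ⊤ := if_pos rfl


lemma nnegK_zero : nnegK 0 := Or.inl rfl


lemma posK_one : posK 1 := by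
  constructor
  · exact one_ne_zero
  · rw [HahnSeries.order_one]
    simp [HahnSeries.coeff_one]


lemma val2K_one : val2K (1 : K2) = ((0 : Gamma2) : WithTop Gamma2) := by
  rw [val2K_eq _ one_ne_zero, HahnSeries.order_one]

-- L1

lemma val2K_mul (x y : K2) : val2K (x * y) = val2K x + val2K y := by
  by_cases hx : x = 0
  · simp [hx, val2K_zero]
  by_cases hy : y = 0
  · simp [hy, val2K_zero]
  rw [val2K_eq _ hx, val2K_eq _ hy, val2K_eq _ (mul_ne_zero hx hy),
    HahnSeries.order_mul hx hy]
  rfl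


lemma lc_eq {x : K2} (hx : x ≠ 0) : x.leadingCoeff = x.coeff x.order := by
  rw [HahnSeries.leadingCoeff_eq]

-- L2

lemma posK_mul {x y : K2} (hx : posK x) (hy : posK y) : posK (x * y) := by
  refine ⟨mul_ne_zero hx.1 hy.1, ?_⟩
  rw [HahnSeries.order_mul hx.1 hy.1, HahnSeries.coeff_mul_order_add_order, lc_eq hx.1, lc_eq hy.1]
  exact mul_pos hx.2 hy.2


lemma nnegK_mul {x y : K2} (hx : nnegK x) (hy : nnegK y) : nnegK (x * y) := by
  rcases hx with h | h; · simp [nnegK, h]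
  rcases hy with h' | h'; · simp [nnegK, h']
  exact Or.inr (posK_mul h h')

-- L3: addition of nonnegatives

lemma add_nneg_val {x y : K2} (hx : nnegK x) (hy : nnegK y) :
    nnegK (x + y) ∧ val2K (x + y) = min (val2K x) (val2K y) := by
  rcases hx with rfl | hx
  · simp [nnegK_zero, val2K_zero, hy]
  rcases hy with rfl | hy
  · simp [val2K_zero]
    exact Or.inr hx
  rcases lt_trichotomy x.order y.order with h | h | h
  · have hc : (x + y).coeff x.order = x.coeff x.order := by
      rw [HahnSeries.coeff_add, HahnSeries.coeff_eq_zero_of_lt_order h, add_zero]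
    have h0 : ∀ δ, δ < x.order → (x + y).coeff δ = 0 := by
      intro δ hδ
      rw [HahnSeries.coeff_add, HahnSeries.coeff_eq_zero_of_lt_order hδ,
        HahnSeries.coeff_eq_zero_of_lt_order (hδ.trans h), add_zero]
    obtain ⟨hne, hord⟩ := order_eq_of _ _ (by rw [hc]; exact ne_of_gt hx.2) h0
    refine ⟨Or.inr ⟨hne, by rw [hord, hc]; exact hx.2⟩, ?_⟩
    rw [val2K_eq _ hne, val2K_eq _ hx.1, val2K_eq _ hy.1, hord]
    rw [min_eq_left]
    exact_mod_cast h.le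
  · have hc : (x + y).coeff x.order = x.coeff x.order + y.coeff y.order := by
      rw [HahnSeries.coeff_add, h]
    have hpos : 0 < x.coeff x.order + y.coeff y.order := add_pos hx.2 hy.2
    have h0 : ∀ δ, δ < x.order → (x + y).coeff δ = 0 := by
      intro δ hδ
      rw [HahnSeries.coeff_add, HahnSeries.coeff_eq_zero_of_lt_order hδ,
        HahnSeries.coeff_eq_zero_of_lt_order (h ▸ hδ), add_zero]
    obtain ⟨hne, hord⟩ := order_eq_of _ _ (by rw [hc]; exact ne_of_gt hpos) h0
    refine ⟨Or.inr ⟨hne, by rw [hord, hc]; exact hpos⟩, ?_⟩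
    rw [val2K_eq _ hne, val2K_eq _ hx.1, val2K_eq _ hy.1, hord, h, min_self]
  · have hc : (x + y).coeff y.order = y.coeff y.order := by
      rw [HahnSeries.coeff_add, HahnSeries.coeff_eq_zero_of_lt_order h, zero_add]
    have h0 : ∀ δ, δ < y.order → (x + y).coeff δ = 0 := by
      intro δ hδ
      rw [HahnSeries.coeff_add, HahnSeries.coeff_eq_zero_of_lt_order hδ,
        HahnSeries.coeff_eq_zero_of_lt_order (hδ.trans h), add_zero]
    obtain ⟨hne, hord⟩ := order_eq_of _ _ (by rw [hc]; exact ne_of_gt hy.2) h0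
    refine ⟨Or.inr ⟨hne, by rw [hord, hc]; exact hy.2⟩, ?_⟩
    rw [val2K_eq _ hne, val2K_eq _ hx.1, val2K_eq _ hy.1, hord]
    rw [min_eq_right]
    exact_mod_cast h.le


lemma nnegK_add {x y : K2} (hx : nnegK x) (hy : nnegK y) : nnegK (x + y) :=
  (add_nneg_val hx hy).1


lemma val2K_add {x y : K2} (hx : nnegK x) (hy : nnegK y) :
    val2K (x + y) = min (val2K x) (val2K y) := (add_nneg_val hx hy).2

-- L4: finite sums

lemma sum_nneg_val {ι : Type*} (s : Finset ι) (f : ι → K2)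
    (hf : ∀ j ∈ s, nnegK (f j)) :
    nnegK (∑ j ∈ s, f j) ∧ val2K (∑ j ∈ s, f j) = s.inf fun j => val2K (f j) := by
  classical
  induction s using Finset.cons_induction with
  | empty => simp [nnegK_zero, val2K_zero]
  | cons a s ha ih =>
    rw [Finset.sum_cons, Finset.inf_cons]
    have h1 := hf a (Finset.mem_cons_self a s)
    obtain ⟨h2, h3⟩ := ih fun j hj => hf j (Finset.mem_cons_of_mem hj)
    exact ⟨nnegK_add h1 h2, by rw [val2K_add h1 h2, h3]⟩

-- singles

def sgl (a : WithTop Gamma2) : K2 :=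
  match a with
  | ⊤ => 0
  | (γ : Gamma2) => HahnSeries.single γ 1

lemma sgl_top : sgl ⊤ = 0 := rfl

lemma sgl_coe (γ : Gamma2) : sgl ↑γ = HahnSeries.single γ 1 := rfl


lemma posK_single (γ : Gamma2) {c : ℝ} (hc : 0 < c) : posK (HahnSeries.single γ c) := by
  refine ⟨HahnSeries.single_ne_zero (ne_of_gt hc), ?_⟩
  rw [HahnSeries.order_single (ne_of_gt hc), HahnSeries.coeff_single_same]
  exact hc


lemma val2K_single (γ : Gamma2) {c : ℝ} (hc : c ≠ 0) :
    val2K (HahnSeries.single γ c) = ↑γ := by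
  rw [val2K_eq _ (HahnSeries.single_ne_zero hc), HahnSeries.order_single hc]


lemma nnegK_sgl (a : WithTop Gamma2) : nnegK (sgl a) := by
  cases a with
  | top => exact nnegK_zero
  | coe γ => exact Or.inr (posK_single γ one_pos)


lemma val2K_sgl (a : WithTop Gamma2) : val2K (sgl a) = a := by
  cases a with
  | top => exact val2K_zero
  | coe γ => exact val2K_single γ one_ne_zero

-- H : 1 - s

lemma one_sub_pos {s : K2} (hs : ((0 : Gamma2) : WithTop Gamma2) < val2K s) :
    posK (1 - s) ∧ val2K (1 - s) = ((0 : Gamma2) : WithTop Gamma2) := by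
  have hs0 : ∀ δ : Gamma2, δ ≤ 0 → s.coeff δ = 0 := by
    intro δ hδ
    by_cases h : s = 0
    · simp [h]
    · apply HahnSeries.coeff_eq_zero_of_lt_order
      rw [val2K_eq _ h] at hs
      exact lt_of_le_of_lt hδ (by exact_mod_cast hs)
  have hc : (1 - s).coeff 0 = 1 := by
    rw [HahnSeries.coeff_sub, hs0 0 le_rfl, sub_zero, HahnSeries.coeff_one, if_pos rfl]
  have h0 : ∀ δ : Gamma2, δ < 0 → (1 - s).coeff δ = 0 := by
    intro δ hδ
    rw [HahnSeries.coeff_sub, hs0 δ hδ.le, sub_zero, HahnSeries.coeff_one,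
      if_neg (ne_of_lt hδ)]
  obtain ⟨hne, hord⟩ := order_eq_of _ _ (hc ▸ one_ne_zero) h0
  exact ⟨⟨hne, by rw [hord, hc]; exact one_pos⟩, by rw [val2K_eq _ hne, hord]⟩

-- L7 : partition of unity for two

lemma exists_partition {lam mu : WithTop Gamma2}
    (h : min lam mu = ((0 : Gamma2) : WithTop Gamma2)) :
    ∃ l m : K2, nnegK l ∧ nnegK m ∧ l + m = 1 ∧ val2K l = lam ∧ val2K m = mu := by
  have key : ∀ a : WithTop Gamma2, ((0 : Gamma2) : WithTop Gamma2) < a →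
      ∃ l m : K2, nnegK l ∧ nnegK m ∧ l + m = 1 ∧ val2K l = ((0:Gamma2) : WithTop Gamma2)
        ∧ val2K m = a := by
    intro a ha
    refine ⟨1 - sgl a, sgl a, Or.inr (one_sub_pos ?_).1, nnegK_sgl a, by ring,
      (one_sub_pos ?_).2, val2K_sgl a⟩ <;> rw [val2K_sgl] <;> exact ha
  have half : ∃ l m : K2, nnegK l ∧ nnegK m ∧ l + m = 1 ∧
      val2K l = ((0:Gamma2) : WithTop Gamma2) ∧ val2K m = ((0:Gamma2) : WithTop Gamma2) := by
    refine ⟨HahnSeries.single 0 (1/2), HahnSeries.single 0 (1/2),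
      Or.inr (posK_single _ (by norm_num)), Or.inr (posK_single _ (by norm_num)), ?_,
      val2K_single _ (by norm_num), val2K_single _ (by norm_num)⟩
    ext g
    simp [HahnSeries.coeff_add, HahnSeries.coeff_single, HahnSeries.coeff_one]
    split <;> norm_num
  rcases le_total lam mu with hle | hle
  · have hl : lam = ((0:Gamma2) : WithTop Gamma2) := by rw [← h, min_eq_left hle]
    have hmu : ((0:Gamma2) : WithTop Gamma2) ≤ mu := hl ▸ hle
    rcases eq_or_lt_of_le hmu with heq | hlt
    · obtain ⟨l, m, a1, a2, a3, a4, a5⟩ := half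
      exact ⟨l, m, a1, a2, a3, by rw [a4, hl], by rw [a5, ← heq]⟩
    · obtain ⟨l, m, a1, a2, a3, a4, a5⟩ := key mu hlt
      exact ⟨l, m, a1, a2, a3, by rw [a4, hl], a5⟩
  · have hm : mu = ((0:Gamma2) : WithTop Gamma2) := by rw [← h, min_eq_right hle]
    have hlam : ((0:Gamma2) : WithTop Gamma2) ≤ lam := hm ▸ hle
    rcases eq_or_lt_of_le hlam with heq | hlt
    · obtain ⟨l, m, a1, a2, a3, a4, a5⟩ := half
      exact ⟨l, m, a1, a2, a3, by rw [a4, ← heq], by rw [a5, hm]⟩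
    · obtain ⟨l, m, a1, a2, a3, a4, a5⟩ := key lam hlt
      exact ⟨m, l, a2, a1, by rw [add_comm]; exact a3, a5, by rw [a4, hm]⟩


lemma comb_formula {d : ℕ} {l m : K2} {x y : Fin d → K2} (hl : nnegK l) (hm : nnegK m)
    (hx : ∀ i, nnegK (x i)) (hy : ∀ i, nnegK (y i)) :
    val2vec (l • x + m • y) = tropComb2 (val2K l) (val2K m) (val2vec x) (val2vec y) := by
  funext i
  show val2K (l • x i + m • y i) = _
  rw [smul_eq_mul, smul_eq_mul,
    val2K_add (nnegK_mul hl (hx i)) (nnegK_mul hm (hy i)), val2K_mul, val2K_mul]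
  rfl

-- sum formula

lemma sum_formula {d n : ℕ} (l : Fin n → K2) (v : Fin n → Fin d → K2)
    (hl : ∀ j, nnegK (l j)) (hv : ∀ j i, nnegK (v j i)) :
    val2vec (∑ j, l j • v j) =
      fun i => Finset.univ.inf fun j => val2K (l j) + val2vec (v j) i := by
  funext i
  show val2K ((∑ j, l j • v j) i) = _
  rw [Finset.sum_apply]
  have : ∀ j : Fin n, (l j • v j) i = l j * v j i := fun j => rfl
  rw [Finset.sum_congr rfl fun j _ => this j,
    (sum_nneg_val Finset.univ _ fun j _ => nnegK_mul (hl j) (hv j i)).2]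
  exact Finset.inf_congr rfl fun j _ => val2K_mul _ _


lemma entries_nneg {d n : ℕ} (l : Fin n → K2) (v : Fin n → Fin d → K2)
    (hl : ∀ j, nnegK (l j)) (hv : ∀ j i, nnegK (v j i)) (i : Fin d) :
    nnegK ((∑ j, l j • v j) i) := by
  rw [Finset.sum_apply]
  exact (sum_nneg_val Finset.univ _ fun j _ => nnegK_mul (hl j) (hv j i)).1

-- central lemma

lemma central {d n : ℕ} (v : Fin n → Fin d → K2) (hv : ∀ j i, nnegK (v j i)) :
    val2vec '' {x | ∃ l : Fin n → K2, (∀ j, nnegK (l j)) ∧ (∑ j, l j) = 1 ∧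
        x = ∑ j, l j • v j} =
      {x | ∃ lam : Fin n → WithTop Gamma2,
        (Finset.univ.inf lam = ((0 : Gamma2) : WithTop Gamma2)) ∧
        x = fun i => Finset.univ.inf fun j => lam j + val2vec (v j) i} := by
  ext p
  constructor
  · rintro ⟨x, ⟨l, hl, hsum, rfl⟩, rfl⟩
    refine ⟨fun j => val2K (l j), ?_, ?_⟩
    · rw [show Finset.univ.inf (fun j => val2K (l j)) = val2K (∑ j, l j) from
        ((sum_nneg_val Finset.univ l fun j _ => hl j).2).symm, hsum, val2K_one]
    · exact sum_formula l v hl hv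
  · rintro ⟨lam, hlam, rfl⟩
    have hne : (Finset.univ : Finset (Fin n)).Nonempty := by
      by_contra hn
      rw [Finset.not_nonempty_iff_eq_empty.mp hn] at hlam
      simp at hlam
    -- all lam j ≥ 0
    have hge : ∀ j, ((0:Gamma2) : WithTop Gamma2) ≤ lam j := fun j =>
      hlam ▸ Finset.inf_le (Finset.mem_univ j)
    set S : Finset (Fin n) := Finset.univ.filter (fun j => lam j = ((0:Gamma2) : WithTop Gamma2)) with hS
    have hSne : S.Nonempty := by
      obtain ⟨j0, _, hj0⟩ := Finset.exists_mem_eq_inf Finset.univ hne lam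
      exact ⟨j0, Finset.mem_filter.mpr ⟨Finset.mem_univ j0, by rw [← hj0, hlam]⟩⟩
    set r : K2 := ∑ j ∈ Sᶜ, sgl (lam j) with hr
    have hrval : ((0:Gamma2) : WithTop Gamma2) < val2K r := by
      rw [hr, (sum_nneg_val _ _ fun j _ => nnegK_sgl _).2]
      rw [Finset.lt_inf_iff]
      · intro j hj
        rw [val2K_sgl]
        rcases lt_or_eq_of_le (hge j) with h | h
        · exact h
        · exfalso
          exact (Finset.mem_compl.mp hj) (Finset.mem_filter.mpr ⟨Finset.mem_univ j, h.symm⟩)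
      · exact WithTop.coe_lt_top _
    obtain ⟨hpos1r, hval1r⟩ := one_sub_pos hrval
    set c : ℝ := ((S.card : ℝ))⁻¹ with hc
    have hcpos : 0 < c := by
      rw [hc]
      have := hSne.card_pos
      positivity
    set l : Fin n → K2 := fun j => if j ∈ S then HahnSeries.C c * (1 - r) else sgl (lam j)
      with hldef
    have hlS : ∀ j ∈ S, l j = HahnSeries.C c * (1 - r) := fun j hj => by
      simp only [hldef, hj, if_true]
    have hlSc : ∀ j ∈ Sᶜ, l j = sgl (lam j) := fun j hj => by
      simp only [hldef, Finset.mem_compl.mp hj, if_false]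
    have hlnneg : ∀ j, nnegK (l j) := by
      intro j
      by_cases hj : j ∈ S
      · rw [hlS j hj]
        exact nnegK_mul (Or.inr (by rw [HahnSeries.C_apply]; exact posK_single _ hcpos))
          (Or.inr hpos1r)
      · rw [hlSc j (Finset.mem_compl.mpr hj)]
        exact nnegK_sgl _
    have hlval : ∀ j, val2K (l j) = lam j := by
      intro j
      by_cases hj : j ∈ S
      · rw [hlS j hj, val2K_mul, HahnSeries.C_apply, val2K_single _ (ne_of_gt hcpos),
          hval1r, (Finset.mem_filter.mp hj).2]
        simp
      · rw [hlSc j (Finset.mem_compl.mpr hj)]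
        exact val2K_sgl _
    have hsum : (∑ j, l j) = 1 := by
      rw [← Finset.sum_add_sum_compl S l]
      have h1 : ∑ j ∈ S, l j = 1 - r := by
        rw [Finset.sum_congr rfl hlS, Finset.sum_const, nsmul_eq_mul]
        have hcast : ((S.card : K2)) = HahnSeries.C ((S.card : ℝ)) := by
          rw [map_natCast]
        rw [hcast, ← mul_assoc, ← map_mul, hc, mul_inv_cancel₀ (by
          exact_mod_cast hSne.card_pos.ne'), HahnSeries.C_one, one_mul]
      have h2 : ∑ j ∈ Sᶜ, l j = r := by
        rw [hr]
        exact Finset.sum_congr rfl hlSc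
      rw [h1, h2]
      ring
    refine ⟨∑ j, l j • v j, ⟨l, hlnneg, hsum, rfl⟩, ?_⟩
    rw [sum_formula l v hlnneg hv]
    funext i
    exact Finset.inf_congr rfl fun j _ => by rw [hlval j]


/-- If `K ⊆ 𝕂_{≥0}^d` is convex then `val₂(K)` is rank two
tropically convex, and conversely every rank two tropically convex set arises this
way; moreover ordinary polytopes tropicalise to rank two tropical polytopes, and
every rank two tropical polytope is the image of an ordinary polytope. -/
theorem tropicalisation_of_convex_sets (d : ℕ) :
    (∀ K : Set (Fin d → K2), (∀ x ∈ K, ∀ i, nnegK (x i)) → IsConvexK K →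
      IsTropConvex2 (val2vec '' K)) ∧
    (∀ M : Set (Fin d → WithTop Gamma2), IsTropConvex2 M →
      ∃ K : Set (Fin d → K2), (∀ x ∈ K, ∀ i, nnegK (x i)) ∧ IsConvexK K ∧
        val2vec '' K = M) ∧
    (∀ K : Set (Fin d → K2), (∀ x ∈ K, ∀ i, nnegK (x i)) → IsPolytopeK K →
      IsTropPolytope2 (val2vec '' K)) ∧
    (∀ M : Set (Fin d → WithTop Gamma2), IsTropPolytope2 M →
      ∃ K : Set (Fin d → K2), (∀ x ∈ K, ∀ i, nnegK (x i)) ∧ IsPolytopeK K ∧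
        val2vec '' K = M) := by
  refine ⟨?_, ?_, ?_, ?_⟩
  · -- Part 1
    intro K hK hconv p hp q hq lam mu hmin
    obtain ⟨x, hx, rfl⟩ := hp
    obtain ⟨y, hy, rfl⟩ := hq
    obtain ⟨l, m, hl, hm, hsum, hvl, hvm⟩ := exists_partition hmin
    exact ⟨l • x + m • y, hconv x hx y hy l m hl hm hsum,
      by rw [comb_formula hl hm (hK x hx) (hK y hy), hvl, hvm]⟩
  · -- Part 2
    intro M hM
    refine ⟨{x | (∀ i, nnegK (x i)) ∧ val2vec x ∈ M}, fun x hx => hx.1, ?_, ?_⟩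
    · intro p hp q hq l m hl hm hsum
      refine ⟨fun i => ?_, ?_⟩
      · show nnegK (l • p i + m • q i)
        rw [smul_eq_mul, smul_eq_mul]
        exact nnegK_add (nnegK_mul hl (hp.1 i)) (nnegK_mul hm (hq.1 i))
      · rw [comb_formula hl hm hp.1 hq.1]
        refine hM _ hp.2 _ hq.2 _ _ ?_
        rw [← val2K_add hl hm, hsum, val2K_one]
    · ext p
      constructor
      · rintro ⟨x, hx, rfl⟩
        exact hx.2
      · intro hp
        have hval : val2vec (fun i => sgl (p i)) = p := funext fun i => val2K_sgl _
        exact ⟨fun i => sgl (p i), ⟨fun i => nnegK_sgl _, (by rw [hval]; exact hp)⟩, hval⟩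
  · -- Part 3
    rintro K hK ⟨n, v, rfl⟩
    have hv : ∀ j i, nnegK (v j i) := by
      intro j i
      refine hK (v j) ⟨fun k => if k = j then 1 else 0, fun k => ?_, ?_, ?_⟩ i
      · by_cases h : k = j
        · simp only [if_pos h]
          exact Or.inr posK_one
        · simp only [if_neg h]
          exact nnegK_zero
      · simp
      · have h1 : ∀ k, ((if k = j then (1:K2) else 0) • v k) = if k = j then v k else 0 := by
          intro k
          by_cases h : k = j
          · rw [if_pos h, if_pos h, one_smul]
          · rw [if_neg h, if_neg h]
            exact zero_smul K2 (v k)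
        rw [Finset.sum_congr rfl fun k _ => h1 k, Finset.sum_ite_eq' Finset.univ j v,
          if_pos (Finset.mem_univ j)]
    exact ⟨n, fun j => val2vec (v j), central v hv⟩
  · -- Part 4
    rintro M ⟨n, w, rfl⟩
    set v : Fin n → Fin d → K2 := fun j i => sgl (w j i) with hvdef
    have hv : ∀ j i, nnegK (v j i) := fun j i => nnegK_sgl _
    refine ⟨{x | ∃ l : Fin n → K2, (∀ j, nnegK (l j)) ∧ (∑ j, l j) = 1 ∧
        x = ∑ j, l j • v j}, ?_, ⟨n, v, rfl⟩, ?_⟩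
    · rintro x ⟨l, hl, -, rfl⟩ i
      exact entries_nneg l v hl hv i
    · rw [central v hv]
      have hvw : ∀ (j : Fin n) (i : Fin d), val2vec (v j) i = w j i := fun j i =>
        val2K_sgl _
      simp only [hvw]
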